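/- For every m ≥ 1 the polynomial P_m(t) has the form P_m(t) = −t^{n+m} + Σ_{j=0}^{n−1} η_m^j t^j (that is, η_m^{n+m} = −1 and η_m^j = 0 for n ≤ j ≤ n+m−1). Moreover P_m(λ_r) = 0 for each r, so each λ_r satisfies the monic integral relation λ_r^{n+m} = Σ_{j=0}^{n−1} η_m^j λ_r^j over the subalgebra k[η_m^0,…,η_m^{n−1}]. Consequently, for every m ≥ 1 the polynomial ring k[λ_1,…,λ_n] is a finitely generated module over its subalgebra generated by η_m^0, η_m^1, …, η_m^{n−1}. -/

import Mathlib

open Polynomial PowerSeries Finset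

section Aux
variable {R : Type*} [CommRing R]

/-- the product `∏ (1 - λᵢ τ)⁻¹ = ∏ ∑ λᵢ^s τ^s` over a list. -/
noncomputable def Hser (l : List R) : PowerSeries R :=
  (l.map fun x => PowerSeries.mk fun s => x ^ s).prod

/-- `q_m = ∑_{s ≤ m} h_s t^{m-s}`. -/
noncomputable def qpoly (l : List R) (m : ℕ) : Polynomial R :=
  ∑ s ∈ Finset.range (m + 1),
    Polynomial.C (PowerSeries.coeff s (Hser l)) * Polynomial.X ^ (m - s)

/-- `∏ (t - λᵢ)`. -/
noncomputable def Apoly (l : List R) : Polynomial R :=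
  (l.map fun x => Polynomial.X - Polynomial.C x).prod

lemma Hser_nil : Hser ([] : List R) = 1 := by simp [Hser]

lemma Hser_cons (x : R) (l : List R) :
    Hser (x :: l) = (PowerSeries.mk fun s => x ^ s) * Hser l := by simp [Hser]

lemma Hser_coeff_zero (l : List R) : PowerSeries.coeff 0 (Hser l) = 1 := by
  simp only [Hser, PowerSeries.coeff_zero_eq_constantCoeff, map_list_prod]
  simp [List.map_map, Function.comp_def]

lemma geom_eq (x : R) : (PowerSeries.mk fun s => x ^ s) =
    1 + PowerSeries.C x * (PowerSeries.X * PowerSeries.mk fun s => x ^ s) := by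
  ext n
  cases n with
  | zero => simp
  | succ n => simp [PowerSeries.coeff_C_mul, PowerSeries.coeff_succ_X_mul, pow_succ, mul_comm]

lemma Hser_coeff_succ (x : R) (l : List R) (s : ℕ) :
    PowerSeries.coeff (s + 1) (Hser (x :: l)) =
      x * PowerSeries.coeff s (Hser (x :: l)) + PowerSeries.coeff (s + 1) (Hser l) := by
  conv_lhs => rw [Hser_cons, geom_eq x, add_mul, one_mul, mul_assoc, mul_assoc,
    ← Hser_cons]
  rw [map_add, PowerSeries.coeff_C_mul, PowerSeries.coeff_succ_X_mul]
  ring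

lemma qpoly_succ (l : List R) (m : ℕ) :
    qpoly l (m + 1) = Polynomial.X * qpoly l m +
      Polynomial.C (PowerSeries.coeff (m + 1) (Hser l)) := by
  rw [qpoly, Finset.sum_range_succ, Nat.sub_self, pow_zero, mul_one]
  congr 1
  rw [qpoly, Finset.mul_sum]
  refine Finset.sum_congr rfl fun s hs => ?_
  rw [Finset.mem_range] at hs
  have : m + 1 - s = (m - s) + 1 := by omega
  rw [this, pow_succ]
  ring

lemma claimA (x : R) (l : List R) (m : ℕ) :
    (Polynomial.X - Polynomial.C x) * qpoly (x :: l) m =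
      qpoly l (m + 1) - Polynomial.C (PowerSeries.coeff (m + 1) (Hser (x :: l))) := by
  induction m with
  | zero =>
      have h0 : qpoly (x :: l) 0 = 1 := by
        simp [qpoly, Hser_coeff_zero]
      have h1 : qpoly l 1 = Polynomial.X + Polynomial.C (PowerSeries.coeff 1 (Hser l)) := by
        rw [qpoly_succ]
        simp [qpoly, Hser_coeff_zero]
      rw [h0, h1, Hser_coeff_succ, Hser_coeff_zero]
      simp only [map_add, map_mul, mul_one]
      ring
  | succ m ih =>
      rw [qpoly_succ, mul_add, mul_comm (Polynomial.X - Polynomial.C x) (Polynomial.X * _),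
        mul_assoc, mul_comm (qpoly (x :: l) m), ih]
      rw [qpoly_succ l (m + 1), Hser_coeff_succ x l (m + 1)]
      simp only [map_add, map_mul]
      ring
end Aux

section Aux2
variable {R : Type*} [CommRing R]

lemma Apoly_nil : Apoly ([] : List R) = 1 := by simp [Apoly]

lemma Apoly_cons (x : R) (l : List R) :
    Apoly (x :: l) = (Polynomial.X - Polynomial.C x) * Apoly l := by simp [Apoly]

lemma Apoly_degree_le (l : List R) : (Apoly l).degree ≤ (l.length : ℕ) := by
  induction l with
  | nil => simp [Apoly_nil, Polynomial.degree_one]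
  | cons x l ih =>
      rw [Apoly_cons]
      refine le_trans (Polynomial.degree_mul_le _ _) ?_
      have h1 : (Polynomial.X - Polynomial.C x).degree ≤ 1 := by
        refine le_trans (Polynomial.degree_sub_le _ _) ?_
        exact max_le Polynomial.degree_X_le (le_trans Polynomial.degree_C_le zero_le_one)
      calc (Polynomial.X - Polynomial.C x).degree + (Apoly l).degree
          ≤ 1 + (l.length : ℕ) := add_le_add h1 ih
        _ = ((x :: l).length : ℕ) := by
            simp [List.length_cons]
            rw [← Nat.cast_one, ← Nat.cast_add]
            norm_cast
            omega

lemma key (l : List R) (m : ℕ) :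
    ∃ r : Polynomial R, Apoly l * qpoly l m = Polynomial.X ^ (l.length + m) + r ∧
      r.degree < (l.length : ℕ) := by
  induction l generalizing m with
  | nil =>
      refine ⟨0, ?_, ?_⟩
      · simp [Apoly_nil, qpoly, Hser_nil, PowerSeries.coeff_one]
      · simp
  | cons x l ih =>
      obtain ⟨r, hr, hdeg⟩ := ih (m + 1)
      set c := PowerSeries.coeff (m + 1) (Hser (x :: l)) with hc
      refine ⟨r - Polynomial.C c * Apoly l, ?_, ?_⟩
      · rw [Apoly_cons, mul_assoc, mul_comm (Apoly l), ← mul_assoc, claimA, sub_mul,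
          mul_comm (qpoly l (m + 1)), hr]
        have : (x :: l).length + m = l.length + (m + 1) := by simp [List.length_cons]; omega
        rw [this]
        ring
      · have h2 : (Polynomial.C c * Apoly l).degree ≤ (l.length : ℕ) := by
          refine le_trans (Polynomial.degree_mul_le _ _) ?_
          calc (Polynomial.C c).degree + (Apoly l).degree ≤ 0 + (l.length : ℕ) :=
                add_le_add Polynomial.degree_C_le (Apoly_degree_le l)
            _ = (l.length : ℕ) := by rw [zero_add]
        refine lt_of_le_of_lt (Polynomial.degree_sub_le _ _) ?_
        have hlt : ((l.length : ℕ) : WithBot ℕ) < (((x :: l).length : ℕ) : WithBot ℕ) := by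
          simp [List.length_cons]
          exact_mod_cast Nat.lt_succ_self _
        exact max_lt (lt_of_lt_of_le hdeg (le_of_lt hlt)) (lt_of_le_of_lt h2 hlt)
end Aux2



/-- The element `∏_{i=1}^n (t - λ_i) · (-∑_{a≥0} t^a τ^a) · ∏_{i=1}^n (∑_{s≥0} λ_i^s τ^s)`
of `k[λ_1,…,λ_n][t]⟦τ⟧`, i.e. the expansion of
`∏ (t - λ_i) / ((tτ - 1)·∏ (1 - τλ_i))` as a power series in `τ`. -/
noncomputable def EE (k : Type*) [Field k] (n : ℕ) :
    PowerSeries (Polynomial (MvPolynomial (Fin n) k)) :=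
  (PowerSeries.C (∏ i : Fin n, (Polynomial.X - Polynomial.C (MvPolynomial.X i)))) *
    (PowerSeries.mk fun a => -(Polynomial.X ^ a)) *
    ∏ i : Fin n, PowerSeries.mk fun s => Polynomial.C (MvPolynomial.X i ^ s)

/-- `Pm k n m = P_m(t) ∈ k[λ_1,…,λ_n][t]`, the coefficient of `τ^m` in the above
expansion; its `t`-coefficients are the symmetric polynomials `η_m^j`. -/
noncomputable def Pm (k : Type*) [Field k] (n m : ℕ) :
    Polynomial (MvPolynomial (Fin n) k) :=
  PowerSeries.coeff m (EE k n)

section Conn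
variable (k : Type*) [Field k] (n : ℕ)

noncomputable def lX : List (MvPolynomial (Fin n) k) :=
  List.ofFn fun i : Fin n => MvPolynomial.X i

lemma lX_length : (lX k n).length = n := by simp [lX]

lemma Apoly_lX : Apoly (lX k n) =
    ∏ i : Fin n, (Polynomial.X - Polynomial.C (MvPolynomial.X i)) := by
  rw [Apoly, lX, List.map_ofFn, List.prod_ofFn]
  rfl

lemma map_Hser : PowerSeries.map (Polynomial.C (R := MvPolynomial (Fin n) k)) (Hser (lX k n)) =
    ∏ i : Fin n, PowerSeries.mk fun s => Polynomial.C (MvPolynomial.X i ^ s) := by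
  rw [Hser, lX, List.map_ofFn, map_list_prod, List.map_ofFn, List.prod_ofFn]
  refine Finset.prod_congr rfl fun i _ => ?_
  ext s
  simp [PowerSeries.coeff_map]

lemma coeff_G_mul {R : Type*} [CommRing R] (l : List R) (m : ℕ) :
    PowerSeries.coeff m ((PowerSeries.mk fun a => -(Polynomial.X ^ a : Polynomial R)) *
      PowerSeries.map Polynomial.C (Hser l)) = -(qpoly l m) := by
  rw [PowerSeries.coeff_mul]
  simp only [PowerSeries.coeff_mk, PowerSeries.coeff_map]
  rw [Finset.Nat.sum_antidiagonal_eq_sum_range_succ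
    (fun a b => -(Polynomial.X ^ a) * Polynomial.C (PowerSeries.coeff b (Hser l)))]
  rw [qpoly, ← Finset.sum_neg_distrib, ← Finset.sum_range_reflect]
  refine Finset.sum_congr rfl fun j hj => ?_
  rw [Finset.mem_range] at hj
  have h1 : m + 1 - 1 - j = m - j := by omega
  rw [h1]
  have h2 : m - (m - j) = j := by omega
  rw [h2]
  ring

lemma Pm_eq (m : ℕ) : Pm k n m = -(Apoly (lX k n) * qpoly (lX k n) m) := by
  rw [Pm, EE, ← map_Hser, mul_assoc, PowerSeries.coeff_C_mul, Apoly_lX, coeff_G_mul]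
  ring
end Conn

/-- for every `m ≥ 1`:
`P_m(t) = -t^(n+m) + ∑_{j<n} η_m^j t^j`; moreover `P_m(λ_r) = 0` for each `r`, so each
`λ_r` satisfies the monic relation `λ_r^(n+m) = ∑_{j<n} η_m^j λ_r^j` over
`k[η_m^0, …, η_m^(n-1)]`; consequently `k[λ_1,…,λ_n]` is a finitely generated module
over its subalgebra generated by `η_m^0, …, η_m^(n-1)`. -/
theorem stmt_14 {k : Type*} [Field k] {n : ℕ} (hn : 1 ≤ n) (m : ℕ) (hm : 1 ≤ m) :
    (Pm k n m = -(Polynomial.X ^ (n + m)) +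
      ∑ j ∈ Finset.range n, Polynomial.C ((Pm k n m).coeff j) * Polynomial.X ^ j) ∧
    (∀ r : Fin n, Polynomial.eval (MvPolynomial.X r) (Pm k n m) = 0) ∧
    (∀ r : Fin n, (MvPolynomial.X r : MvPolynomial (Fin n) k) ^ (n + m) =
      ∑ j ∈ Finset.range n, (Pm k n m).coeff j * MvPolynomial.X r ^ j) ∧
    Module.Finite
      (Algebra.adjoin k (Set.range fun j : Fin n => (Pm k n m).coeff (j : ℕ)))
      (MvPolynomial (Fin n) k) := by
  obtain ⟨r, hr, hdeg⟩ := key (lX k n) m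
  rw [lX_length] at hr hdeg
  have hPm : Pm k n m = -(Polynomial.X ^ (n + m)) + (-r) := by
    rw [Pm_eq, hr]; ring
  have hcoeffs : ∀ j < n, (Pm k n m).coeff j = (-r).coeff j := by
    intro j hj
    rw [hPm, Polynomial.coeff_add]
    have h0 : (-(Polynomial.X ^ (n + m) : Polynomial (MvPolynomial (Fin n) k))).coeff j = 0 := by
      rw [Polynomial.coeff_neg, Polynomial.coeff_X_pow, if_neg (by omega)]
      simp
    rw [h0, zero_add]
  have hnd : (-r).natDegree < n := by
    rcases eq_or_ne r 0 with h | h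
    · simp [h]; omega
    · rw [Polynomial.natDegree_neg]
      exact (Polynomial.natDegree_lt_iff_degree_lt h).2 hdeg
  have hrsum : (-r) =
      ∑ j ∈ Finset.range n, Polynomial.C ((Pm k n m).coeff j) * Polynomial.X ^ j := by
    conv_lhs => rw [Polynomial.as_sum_range' (-r) n hnd]
    refine Finset.sum_congr rfl fun j hj => ?_
    rw [Finset.mem_range] at hj
    rw [hcoeffs j hj, Polynomial.C_mul_X_pow_eq_monomial]
  have part1 : Pm k n m = -(Polynomial.X ^ (n + m)) +
      ∑ j ∈ Finset.range n, Polynomial.C ((Pm k n m).coeff j) * Polynomial.X ^ j := by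
    conv_lhs => rw [hPm, hrsum]
  have part2 : ∀ i : Fin n, Polynomial.eval (MvPolynomial.X i) (Pm k n m) = 0 := by
    intro i
    rw [Pm_eq, Polynomial.eval_neg, Polynomial.eval_mul, Apoly_lX, Polynomial.eval_prod]
    rw [Finset.prod_eq_zero (Finset.mem_univ i) (by simp)]
    simp
  have part3 : ∀ i : Fin n, (MvPolynomial.X i : MvPolynomial (Fin n) k) ^ (n + m) =
      ∑ j ∈ Finset.range n, (Pm k n m).coeff j * MvPolynomial.X i ^ j := by
    intro i
    have h2 := part2 i
    rw [part1] at h2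
    simp only [Polynomial.eval_add, Polynomial.eval_neg, Polynomial.eval_pow, Polynomial.eval_X,
      Polynomial.eval_finset_sum, Polynomial.eval_mul, Polynomial.eval_C] at h2
    linear_combination -h2
  refine ⟨part1, part2, part3, ?_⟩
  set S := Algebra.adjoin k (Set.range fun j : Fin n => (Pm k n m).coeff (j : ℕ)) with hS
  have hmem : ∀ i : Fin n, (Pm k n m).coeff (i : ℕ) ∈ S := fun i =>
    Algebra.subset_adjoin ⟨i, rfl⟩
  have hint : ∀ x ∈ Set.range (MvPolynomial.X : Fin n → MvPolynomial (Fin n) k),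
      IsIntegral S x := by
    rintro _ ⟨i, rfl⟩
    refine ⟨Polynomial.X ^ (n + m) - ∑ j : Fin n,
      Polynomial.C (⟨(Pm k n m).coeff (j : ℕ), hmem j⟩ : S) * Polynomial.X ^ (j : ℕ), ?_, ?_⟩
    · refine Polynomial.monic_X_pow_sub ?_
      refine lt_of_le_of_lt (Polynomial.degree_sum_le _ _) ?_
      rw [Finset.sup_lt_iff (by exact_mod_cast WithBot.bot_lt_coe (n + m))]
      intro j _
      refine lt_of_le_of_lt (Polynomial.degree_mul_le _ _) ?_
      refine lt_of_le_of_lt (add_le_add Polynomial.degree_C_le (Polynomial.degree_X_pow_le _)) ?_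
      rw [zero_add]
      exact_mod_cast (by omega : (j : ℕ) < n + m)
    · have h3 := part3 i
      rw [Finset.sum_range (fun j => (Pm k n m).coeff j * MvPolynomial.X i ^ j)] at h3
      simp only [Polynomial.eval₂_sub, Polynomial.eval₂_pow, Polynomial.eval₂_X,
        Polynomial.eval₂_finset_sum, Polynomial.eval₂_mul, Polynomial.eval₂_C]
      rw [sub_eq_zero]
      rw [h3]
      rfl
  have htop : Algebra.adjoin S (Set.range (MvPolynomial.X : Fin n → MvPolynomial (Fin n) k))
      = ⊤ := by
    rw [eq_top_iff]
    intro x _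
    have hx : x ∈ Algebra.adjoin k (Set.range (MvPolynomial.X : Fin n → MvPolynomial (Fin n) k)) := by
      rw [MvPolynomial.adjoin_range_X]; trivial
    have hle : Algebra.adjoin k (Set.range (MvPolynomial.X : Fin n → MvPolynomial (Fin n) k)) ≤
        Subalgebra.restrictScalars k
          (Algebra.adjoin S (Set.range (MvPolynomial.X : Fin n → MvPolynomial (Fin n) k))) :=
      Algebra.adjoin_le fun y hy => (Subalgebra.mem_restrictScalars k).2 (Algebra.subset_adjoin hy)
    exact (Subalgebra.mem_restrictScalars k).1 (hle hx)
  have hfg := fg_adjoin_of_finite (Set.finite_range _) hint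
  rw [htop] at hfg
  exact ⟨by rwa [Algebra.top_toSubmodule] at hfg⟩
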